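/- For all positive integers i, j with i, j >= 1, the polynomial identity gamma_{i,j}(x_1,...,x_j) = x_j * gamma_{i-1,j-1}(x_1,...,x_{j-1}) + beta'_{i+1,j-1}(x_1,...,x_{j-2}) holds, where beta'_{i+1,j-1}(x_1,...,x_{j-2}) = beta_{i+1,j-1}(x_1,...,x_{j-2},1). -/

import Mathlib

/-- `Cset i j`: the set of `i`-element subsets `I ⊆ {1,...,j}` such that any two consecutive
elements of `I` differ by an odd number, and `j - max I` is even. -/
def Cset (i j : ℕ) : Finset (Finset ℕ) :=
  (Finset.Icc 1 j).powerset.filter fun I =>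
    I.card = i ∧
    (∀ a ∈ I, ∀ b ∈ I, a < b → (∀ t ∈ Finset.Ioo a b, t ∉ I) → Odd (b - a)) ∧
    (∀ a ∈ I, (∀ b ∈ I, b ≤ a) → Even (j - a))

/-- `A_{i,j}`: members of `C_{i,j}` not containing `j`. -/
def Aset (i j : ℕ) : Finset (Finset ℕ) := (Cset i j).filter fun I => j ∉ I

/-- `B_{i,j}`: members of `C_{i,j}` containing `j`. -/
def Bset (i j : ℕ) : Finset (Finset ℕ) := (Cset i j).filter fun I => j ∈ I

def gamma (i j : ℕ) (x : ℕ → ℤ) : ℤ := ∑ I ∈ Cset i j, ∏ t ∈ I, x t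

def alpha (i j : ℕ) (x : ℕ → ℤ) : ℤ := ∑ I ∈ Aset i j, ∏ t ∈ I, x t

def beta (i j : ℕ) (x : ℕ → ℤ) : ℤ := ∑ I ∈ Bset i j, ∏ t ∈ I, x t

/-- `betaP i j` is `beta_{i,j}` with the last variable `x_j` specialized to `1`. -/
def betaP (i j : ℕ) (x : ℕ → ℤ) : ℤ := beta i j (Function.update x j 1)

lemma mem_Cset {i j : ℕ} {I : Finset ℕ} :
    I ∈ Cset i j ↔ I ⊆ Finset.Icc 1 j ∧ I.card = i ∧
      (∀ a ∈ I, ∀ b ∈ I, a < b → (∀ t ∈ Finset.Ioo a b, t ∉ I) → Odd (b - a)) ∧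
      (∀ a ∈ I, (∀ b ∈ I, b ≤ a) → Even (j - a)) := by
  simp [Cset, Finset.mem_filter, Finset.mem_powerset, and_assoc]

lemma gamma_split (i j : ℕ) (x : ℕ → ℤ) : gamma i j x = alpha i j x + beta i j x := by
  rw [gamma, alpha, beta, Aset, Bset, add_comm,
    Finset.sum_filter_add_sum_filter_not (Cset i j) (fun I => j ∈ I)]

lemma beta_eq (i j : ℕ) (hi : 1 ≤ i) (hj : 1 ≤ j) (x : ℕ → ℤ) :
    beta i j x = x j * gamma (i - 1) (j - 1) x := by
  rw [beta, gamma, Finset.mul_sum]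
  refine Finset.sum_nbij' (fun I => I.erase j) (fun I' => insert j I') ?_ ?_ ?_ ?_ ?_
  · -- forward membership
    intro I hI
    rw [Bset, Finset.mem_filter, mem_Cset] at hI
    obtain ⟨⟨hsub, hcard, hgap, hmax⟩, hjI⟩ := hI
    rw [mem_Cset]
    refine ⟨?_, ?_, ?_, ?_⟩
    · intro a ha
      rw [Finset.mem_erase] at ha
      have := hsub ha.2
      rw [Finset.mem_Icc] at *
      omega
    · rw [Finset.card_erase_of_mem hjI, hcard]
    · intro a ha b hb hab hbet
      rw [Finset.mem_erase] at ha hb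
      refine hgap a ha.2 b hb.2 hab ?_
      intro t ht htI
      have ht' := ht; rw [Finset.mem_Ioo] at ht'
      have hbj : b ≤ j := (Finset.mem_Icc.mp (hsub hb.2)).2
      exact hbet t ht (Finset.mem_erase.mpr ⟨by omega, htI⟩)
    · intro a ha hb
      rw [Finset.mem_erase] at ha
      have haj : a ≤ j := (Finset.mem_Icc.mp (hsub ha.2)).2
      have haj' : a < j := lt_of_le_of_ne haj ha.1
      have hodd : Odd (j - a) := by
        refine hgap a ha.2 j hjI haj' ?_
        intro t ht htI
        rw [Finset.mem_Ioo] at ht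
        have := hb t (Finset.mem_erase.mpr ⟨by omega, htI⟩)
        omega
      obtain ⟨k, hk⟩ := hodd
      exact ⟨k, by omega⟩
  · -- backward membership
    intro I' hI'
    rw [mem_Cset] at hI'
    obtain ⟨hsub, hcard, hgap, hmax⟩ := hI'
    have hjI' : j ∉ I' := by
      intro h
      have := Finset.mem_Icc.mp (hsub h)
      omega
    have hle : ∀ a ∈ I', 1 ≤ a ∧ a ≤ j - 1 := by
      intro a ha; exact Finset.mem_Icc.mp (hsub ha)
    rw [Bset, Finset.mem_filter, mem_Cset]
    refine ⟨⟨?_, ?_, ?_, ?_⟩, Finset.mem_insert_self j I'⟩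
    · intro a ha
      rw [Finset.mem_insert] at ha
      rcases ha with rfl | ha
      · rw [Finset.mem_Icc]; omega
      · have := hle a ha; rw [Finset.mem_Icc]; omega
    · rw [Finset.card_insert_of_notMem hjI', hcard]; omega
    · intro a ha b hb hab hbet
      rw [Finset.mem_insert] at ha hb
      have haI : a ∈ I' := by
        rcases ha with rfl | ha
        · exfalso
          rcases hb with rfl | hb
          · omega
          · have := hle b hb; omega
        · exact ha
      have ha' := hle a haI
      rcases hb with rfl | hb
      · -- b = j : a must be the max of I'
        have hamax : ∀ c ∈ I', c ≤ a := by
          intro c hc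
          by_contra h
          push_neg at h
          have hc' := hle c hc
          exact hbet c (Finset.mem_Ioo.mpr ⟨h, by omega⟩) (Finset.mem_insert_of_mem hc)
        obtain ⟨k, hk⟩ := hmax a haI hamax
        exact ⟨k, by omega⟩
      · refine hgap a haI b hb hab ?_
        intro t ht htI
        exact hbet t ht (Finset.mem_insert_of_mem htI)
    · intro a ha hb
      rw [Finset.mem_insert] at ha
      have haj : a ≤ j := by
        rcases ha with rfl | ha
        · exact le_rfl
        · have := hle a ha; omega
      have : j ≤ a := hb j (Finset.mem_insert_self j I')
      have : a = j := le_antisymm haj this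
      subst this
      simp
  · -- left inverse
    intro I hI
    rw [Bset, Finset.mem_filter] at hI
    exact Finset.insert_erase hI.2
  · -- right inverse
    intro I' hI'
    rw [mem_Cset] at hI'
    refine Finset.erase_insert ?_
    intro h
    have := Finset.mem_Icc.mp (hI'.1 h)
    omega
  · -- products
    intro I hI
    rw [Bset, Finset.mem_filter] at hI
    conv_lhs => rw [← Finset.insert_erase hI.2]
    rw [Finset.prod_insert (Finset.notMem_erase j I)]

lemma alpha_eq (i j : ℕ) (hi : 1 ≤ i) (hj : 1 ≤ j) (x : ℕ → ℤ) :
    alpha i j x = betaP (i + 1) (j - 1) x := by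
  rcases eq_or_lt_of_le hj with h1 | h2
  · -- j = 1 : both sides are zero
    subst h1
    have hA : Aset i 1 = ∅ := by
      rw [Finset.eq_empty_iff_forall_notMem]
      intro I hI
      rw [Aset, Finset.mem_filter, mem_Cset] at hI
      obtain ⟨⟨hsub, hcard, -, -⟩, h1I⟩ := hI
      have : I.Nonempty := Finset.card_pos.mp (by omega)
      obtain ⟨a, ha⟩ := this
      have := Finset.mem_Icc.mp (hsub ha)
      have : a = 1 := by omega
      subst this
      exact h1I ha
    have hB : Bset (i + 1) 0 = ∅ := by
      rw [Finset.eq_empty_iff_forall_notMem]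
      intro J hJ
      rw [Bset, Finset.mem_filter, mem_Cset] at hJ
      have := Finset.mem_Icc.mp (hJ.1.1 hJ.2)
      omega
    simp [alpha, betaP, beta, hA, hB]
  · -- j ≥ 2
    have hj2 : 2 ≤ j := h2
    rw [alpha, betaP, beta]
    refine Finset.sum_nbij' (fun I => insert (j-1) I) (fun J => J.erase (j-1)) ?_ ?_ ?_ ?_ ?_
    · intro I hI
      rw [Aset, Finset.mem_filter, mem_Cset] at hI
      obtain ⟨⟨hsub, hcard, hgap, hmax⟩, hjI⟩ := hI
      have hle : ∀ a ∈ I, 1 ≤ a ∧ a ≤ j - 1 := by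
        intro a ha
        have := Finset.mem_Icc.mp (hsub ha)
        have : a ≠ j := fun h => hjI (h ▸ ha)
        omega
      have hj1I : j - 1 ∉ I := by
        intro h
        have hev := hmax (j-1) h (fun b hb => (hle b hb).2)
        obtain ⟨k, hk⟩ := hev
        omega
      have hle2 : ∀ a ∈ I, a ≤ j - 2 := by
        intro a ha
        have := hle a ha
        have : a ≠ j - 1 := fun h => hj1I (h ▸ ha)
        omega
      rw [Bset, Finset.mem_filter, mem_Cset]
      refine ⟨⟨?_, ?_, ?_, ?_⟩, Finset.mem_insert_self _ _⟩
      · intro a ha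
        rw [Finset.mem_insert] at ha
        rcases ha with rfl | ha
        · rw [Finset.mem_Icc]; omega
        · have := hle a ha; rw [Finset.mem_Icc]; omega
      · rw [Finset.card_insert_of_notMem hj1I, hcard]
      · intro a ha b hb hab hbet
        rw [Finset.mem_insert] at ha hb
        have haI : a ∈ I := by
          rcases ha with rfl | ha
          · exfalso
            rcases hb with rfl | hb
            · omega
            · have := hle2 b hb; omega
          · exact ha
        have ha2 := hle2 a haI
        rcases hb with rfl | hb
        · have hamax : ∀ c ∈ I, c ≤ a := by
            intro c hc
            by_contra h
            push_neg at h
            have hc' := hle2 c hc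
            exact hbet c (Finset.mem_Ioo.mpr ⟨h, by omega⟩) (Finset.mem_insert_of_mem hc)
          obtain ⟨k, hk⟩ := hmax a haI hamax
          have ha1 := hle a haI
          exact ⟨k - 1, by omega⟩
        · refine hgap a haI b hb hab ?_
          intro t ht htI
          exact hbet t ht (Finset.mem_insert_of_mem htI)
      · intro a ha hb
        rw [Finset.mem_insert] at ha
        have haj : a ≤ j - 1 := by
          rcases ha with rfl | ha
          · exact le_rfl
          · exact (hle a ha).2
        have : j - 1 ≤ a := hb (j-1) (Finset.mem_insert_self _ _)
        have : a = j - 1 := le_antisymm haj this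
        subst this
        simp
    · intro J hJ
      rw [Bset, Finset.mem_filter, mem_Cset] at hJ
      obtain ⟨⟨hsub, hcard, hgap, hmax⟩, hj1J⟩ := hJ
      have hle : ∀ a ∈ J, 1 ≤ a ∧ a ≤ j - 1 := fun a ha => Finset.mem_Icc.mp (hsub ha)
      have hle2 : ∀ a ∈ J.erase (j-1), 1 ≤ a ∧ a ≤ j - 2 := by
        intro a ha
        rw [Finset.mem_erase] at ha
        have := hle a ha.2
        have := ha.1
        omega
      rw [Aset, Finset.mem_filter, mem_Cset]
      refine ⟨⟨?_, ?_, ?_, ?_⟩, ?_⟩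
      · intro a ha
        have := hle2 a ha
        rw [Finset.mem_Icc]; omega
      · rw [Finset.card_erase_of_mem hj1J, hcard]; omega
      · intro a ha b hb hab hbet
        have ha' := Finset.mem_erase.mp ha
        have hb' := Finset.mem_erase.mp hb
        refine hgap a ha'.2 b hb'.2 hab ?_
        intro t ht htJ
        have ht' := Finset.mem_Ioo.mp ht
        have hb2 := hle2 b hb
        exact hbet t ht (Finset.mem_erase.mpr ⟨by omega, htJ⟩)
      · intro a ha hb
        have ha2 := hle2 a ha
        have ha' := Finset.mem_erase.mp ha
        have hodd : Odd (j - 1 - a) := by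
          refine hgap a ha'.2 (j-1) hj1J (by omega) ?_
          intro t ht htJ
          rw [Finset.mem_Ioo] at ht
          have := hb t (Finset.mem_erase.mpr ⟨by omega, htJ⟩)
          omega
        obtain ⟨k, hk⟩ := hodd
        exact ⟨k + 1, by omega⟩
      · intro h
        have := hle2 j h
        omega
    · intro I hI
      rw [Aset, Finset.mem_filter, mem_Cset] at hI
      obtain ⟨⟨hsub, hcard, hgap, hmax⟩, hjI⟩ := hI
      have hj1I : j - 1 ∉ I := by
        intro h
        have hle : ∀ b ∈ I, b ≤ j - 1 := by
          intro b hb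
          have := Finset.mem_Icc.mp (hsub hb)
          have : b ≠ j := fun hh => hjI (hh ▸ hb)
          omega
        obtain ⟨k, hk⟩ := hmax (j-1) h hle
        omega
      exact Finset.erase_insert hj1I
    · intro J hJ
      rw [Bset, Finset.mem_filter] at hJ
      exact Finset.insert_erase hJ.2
    · intro I hI
      rw [Aset, Finset.mem_filter, mem_Cset] at hI
      obtain ⟨⟨hsub, hcard, hgap, hmax⟩, hjI⟩ := hI
      have hj1I : j - 1 ∉ I := by
        intro h
        have hle : ∀ b ∈ I, b ≤ j - 1 := by
          intro b hb
          have := Finset.mem_Icc.mp (hsub hb)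
          have : b ≠ j := fun hh => hjI (hh ▸ hb)
          omega
        obtain ⟨k, hk⟩ := hmax (j-1) h hle
        omega
      rw [Finset.prod_insert hj1I, Function.update_self, one_mul]
      refine Finset.prod_congr rfl ?_
      intro t ht
      have : t ≠ j - 1 := fun h => hj1I (h ▸ ht)
      rw [Function.update_of_ne this]

theorem gamma_recurrence (i j : ℕ) (hi : 1 ≤ i) (hj : 1 ≤ j) (x : ℕ → ℤ) :
    gamma i j x = x j * gamma (i - 1) (j - 1) x + betaP (i + 1) (j - 1) x := by
  rw [gamma_split, beta_eq i j hi hj, alpha_eq i j hi hj, add_comm]
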